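/- For the three-state WFSA C over the real semiring (states q0, q1, q2; initial weight 1 on q0; final weight 1 on q2; self-loop on q0 weight 1; transition q0→q1 weight μ1(α); self-loop on q1 weight φ1(α); transition q1→q2 weight μ2(α); self-loop on q2 weight φ2(α)), the prefix scores satisfy: C⟦x_{:0}⟧ = 0 and C⟦x_{:t+1}⟧ = C⟦x_{:t}⟧·φ2(x_{t+1}) + β_t·μ2(x_{t+1}), where β_0 = 0 and β_t = β_{t-1}·φ1(x_t) + μ1(x_t). -/

import Mathlib

/-- Transition weights of the three-state WFSA `C` over the real semiring:
states `0 = q0`, `1 = q1`, `2 = q2`; self-loop on `q0` with weight `1`,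
`q0 → q1` with weight `μ1 a`, self-loop on `q1` with weight `φ1 a`,
`q1 → q2` with weight `μ2 a`, self-loop on `q2` with weight `φ2 a`. -/
def cTau {A : Type*} (μ1 φ1 μ2 φ2 : A → ℝ) : Fin 3 → Fin 3 → A → ℝ := fun q q' a =>
  if q = 0 ∧ q' = 0 then 1
  else if q = 0 ∧ q' = 1 then μ1 a
  else if q = 1 ∧ q' = 1 then φ1 a
  else if q = 1 ∧ q' = 2 then μ2 a
  else if q = 2 ∧ q' = 2 then φ2 a
  else 0

/-- Score assigned by WFSA `C` (initial weight 1 on `q0`, final weight 1 on `q2`)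
to the prefix `x_1 … x_t`: sum over all accepting paths of the product of
initial, transition, and final weights. -/
noncomputable def cScore {A : Type*} (μ1 φ1 μ2 φ2 : A → ℝ) (x : ℕ → A) (t : ℕ) : ℝ :=
  ∑ p : Fin (t + 1) → Fin 3,
    (if p 0 = 0 then (1 : ℝ) else 0) *
      (∏ i : Fin t, cTau μ1 φ1 μ2 φ2 (p i.castSucc) (p i.succ) (x (i.1 + 1))) *
      (if p (Fin.last t) = 2 then (1 : ℝ) else 0)

noncomputable def fwd {A : Type*} (μ1 φ1 μ2 φ2 : A → ℝ) (x : ℕ → A) (t : ℕ) (q : Fin 3) : ℝ :=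
  ∑ p : Fin (t + 1) → Fin 3,
    (if p 0 = 0 then (1 : ℝ) else 0) *
      (∏ i : Fin t, cTau μ1 φ1 μ2 φ2 (p i.castSucc) (p i.succ) (x (i.1 + 1))) *
      (if p (Fin.last t) = q then (1 : ℝ) else 0)

lemma fwd_zero {A : Type*} (μ1 φ1 μ2 φ2 : A → ℝ) (x : ℕ → A) (q : Fin 3) :
    fwd μ1 φ1 μ2 φ2 x 0 q = if q = 0 then 1 else 0 := by
  rw [fwd, Fintype.sum_equiv (Equiv.funUnique (Fin 1) (Fin 3)) _
    (fun r : Fin 3 => (if r = 0 then (1:ℝ) else 0) * 1 * (if r = q then 1 else 0))]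
  · fin_cases q <;> simp [Fin.sum_univ_three]
  · intro p; simp [Fin.last]

lemma fwd_succ {A : Type*} (μ1 φ1 μ2 φ2 : A → ℝ) (x : ℕ → A) (t : ℕ) (q : Fin 3) :
    fwd μ1 φ1 μ2 φ2 x (t + 1) q =
      ∑ r : Fin 3, fwd μ1 φ1 μ2 φ2 x t r * cTau μ1 φ1 μ2 φ2 r q (x (t + 1)) := by
  have hR : ∑ r : Fin 3, fwd μ1 φ1 μ2 φ2 x t r * cTau μ1 φ1 μ2 φ2 r q (x (t + 1)) =
      ∑ g : Fin (t + 1) → Fin 3,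
        ((if g 0 = 0 then (1 : ℝ) else 0) *
          ∏ i : Fin t, cTau μ1 φ1 μ2 φ2 (g i.castSucc) (g i.succ) (x (i.1 + 1))) *
          cTau μ1 φ1 μ2 φ2 (g (Fin.last t)) q (x (t + 1)) := by
    simp only [fwd, Finset.sum_mul]
    rw [Finset.sum_comm]
    apply Finset.sum_congr rfl
    intro g _
    simp [mul_ite, mul_one, mul_zero, ite_mul, zero_mul, Finset.sum_ite_eq,
      Finset.sum_ite_eq', Finset.mem_univ]
  rw [hR, fwd]
  rw [Fintype.sum_equiv (Fin.snocEquiv (fun _ : Fin (t + 2) => Fin 3)).symm _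
    (fun pr : Fin 3 × (Fin (t + 1) → Fin 3) =>
      ((if pr.2 0 = 0 then (1 : ℝ) else 0) *
        (∏ i : Fin t, cTau μ1 φ1 μ2 φ2 (pr.2 i.castSucc) (pr.2 i.succ) (x (i.1 + 1))) *
        cTau μ1 φ1 μ2 φ2 (pr.2 (Fin.last t)) pr.1 (x (t + 1))) *
        (if pr.1 = q then 1 else 0))]
  · rw [Fintype.sum_prod_type, Finset.sum_comm]
    apply Finset.sum_congr rfl
    intro g _
    simp [mul_ite, mul_one, mul_zero, ite_mul, zero_mul, Finset.sum_ite_eq,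
      Finset.sum_ite_eq', Finset.mem_univ, mul_assoc]
  · intro p
    simp only [Fin.snocEquiv_symm_apply]
    rw [Fin.prod_univ_castSucc]
    simp only [Fin.succ_castSucc, Fin.succ_last, Fin.coe_castSucc, Fin.val_last,
      Fin.init, Fin.castSucc_zero, Nat.succ_eq_add_one]
    exact (by intros; ring : ∀ a b c d : ℝ, a * (b * c) * d = a * b * c * d) _ _ _ _

lemma fwd_q0 {A : Type*} (μ1 φ1 μ2 φ2 : A → ℝ) (x : ℕ → A) (t : ℕ) :
    fwd μ1 φ1 μ2 φ2 x t 0 = 1 := by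
  induction t with
  | zero => simp [fwd_zero]
  | succ t ih => rw [fwd_succ, Fin.sum_univ_three, ih]; simp [cTau]


/-- The prefix scores of WFSA `C` satisfy `C⟦x_{:0}⟧ = 0` and
`C⟦x_{:t+1}⟧ = C⟦x_{:t}⟧·φ2(x_{t+1}) + β_t·μ2(x_{t+1})`, where `β_0 = 0` and
`β_t = β_{t-1}·φ1(x_t) + μ1(x_t)`. -/
theorem stmt5 {A : Type*} [Fintype A] (μ1 φ1 μ2 φ2 : A → ℝ) (x : ℕ → A) (β : ℕ → ℝ)
    (hβ0 : β 0 = 0) (hβ : ∀ t, 1 ≤ t → β t = β (t - 1) * φ1 (x t) + μ1 (x t)) :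
    cScore μ1 φ1 μ2 φ2 x 0 = 0 ∧
      ∀ t, cScore μ1 φ1 μ2 φ2 x (t + 1) =
        cScore μ1 φ1 μ2 φ2 x t * φ2 (x (t + 1)) + β t * μ2 (x (t + 1)) := by
  have hsc : ∀ t, cScore μ1 φ1 μ2 φ2 x t = fwd μ1 φ1 μ2 φ2 x t 2 := fun t => rfl
  have hq1 : ∀ t, fwd μ1 φ1 μ2 φ2 x t 1 = β t := by
    intro t
    induction t with
    | zero => rw [fwd_zero, hβ0]; simp
    | succ t ih =>
      rw [fwd_succ, Fin.sum_univ_three, ih, fwd_q0, hβ (t + 1) (by omega)]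
      simp [cTau]
      ring
  constructor
  · rw [hsc, fwd_zero]; simp
  · intro t
    rw [hsc, hsc, fwd_succ, Fin.sum_univ_three, hq1, fwd_q0]
    simp [cTau]
    ring
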